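/- Generally, for each l ≥ 0 the polynomial ψ_l*(y) = (1/√(l!)) Σ_{j=0}^{⌊l/4⌋} (1/j!) D_y^{4j} y^l satisfies B* ψ_l* = −(l/4) ψ_l*, where B* u = −u⁗ − (1/4) y u'. -/

import Mathlib

open Finset

private lemma deriv_sum_mono (N : ℕ) (b : ℕ → ℝ) (e : ℕ → ℕ) :
    deriv (fun y : ℝ => ∑ j ∈ Finset.range N, b j * y ^ e j)
      = fun y => ∑ j ∈ Finset.range N, (b j * (e j : ℝ)) * y ^ (e j - 1) := by
  funext y
  have h : HasDerivAt (fun y : ℝ => ∑ j ∈ Finset.range N, b j * y ^ e j)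
      (∑ j ∈ Finset.range N, (b j * (e j : ℝ)) * y ^ (e j - 1)) y := by
    apply HasDerivAt.fun_sum
    intro i _
    simpa [mul_assoc, mul_comm, mul_left_comm] using (hasDerivAt_pow (e i) y).const_mul (b i)
  exact h.deriv

private lemma iteratedDeriv_sum_mono (k N : ℕ) (b : ℕ → ℝ) (e : ℕ → ℕ) :
    iteratedDeriv k (fun y : ℝ => ∑ j ∈ Finset.range N, b j * y ^ e j)
      = fun y => ∑ j ∈ Finset.range N, (b j * ((e j).descFactorial k : ℝ)) * y ^ (e j - k) := by
  induction k with
  | zero => simp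
  | succ k ih =>
    rw [iteratedDeriv_succ, ih,
      deriv_sum_mono N (fun j => b j * ((e j).descFactorial k : ℝ)) (fun j => e j - k)]
    funext y
    refine Finset.sum_congr rfl fun j _ => ?_
    rw [Nat.descFactorial_succ]
    have : e j - k - 1 = e j - (k + 1) := by omega
    rw [this]
    push_cast
    ring

private lemma iteratedDeriv_pow' (n l : ℕ) :
    iteratedDeriv n (fun z : ℝ => z ^ l) = fun y => (l.descFactorial n : ℝ) * y ^ (l - n) := by
  have h : (fun z : ℝ => z ^ l) = fun y : ℝ => ∑ j ∈ Finset.range 1, (1 : ℝ) * y ^ l := by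
    funext y; simp
  rw [h, iteratedDeriv_sum_mono]
  funext y; simp

/-- For each l ≥ 0, the polynomial ψ_l*(y) = (1/√(l!)) Σ_{j=0}^{⌊l/4⌋} (1/j!) D^{4j} y^l
satisfies B* ψ_l* = −(l/4) ψ_l*, where B* u = −u⁗ − (1/4) y u'. -/
theorem stmt_15 (l : ℕ) (ψ : ℝ → ℝ)
    (hψ : ∀ y : ℝ, ψ y = (1 / Real.sqrt (Nat.factorial l)) *
      ∑ j ∈ Finset.range (l / 4 + 1),
        (1 / (Nat.factorial j : ℝ)) * iteratedDeriv (4*j) (fun z : ℝ => z^l) y) :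
    ∀ y : ℝ,
      -(iteratedDeriv 4 ψ y) - (1/4) * y * deriv ψ y = -((l : ℝ)/4) * ψ y := by
  intro y
  set C : ℝ := 1 / Real.sqrt (Nat.factorial l) with hC
  set N : ℕ := l / 4 + 1 with hN
  set b : ℕ → ℝ := fun j => C * ((l.descFactorial (4*j) : ℝ) / (Nat.factorial j : ℝ)) with hb
  have hg : ψ = fun y : ℝ => ∑ j ∈ Finset.range N, b j * y ^ (l - 4*j) := by
    funext z
    rw [hψ z, Finset.mul_sum]
    refine Finset.sum_congr rfl fun j _ => ?_
    rw [iteratedDeriv_pow']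
    push_cast
    ring
  -- derivative
  have hd : deriv ψ y = ∑ j ∈ Finset.range N,
      (b j * ((l - 4*j : ℕ) : ℝ)) * y ^ (l - 4*j - 1) := by
    rw [hg, deriv_sum_mono]
  have h4 : iteratedDeriv 4 ψ y = ∑ j ∈ Finset.range N,
      (b j * ((l - 4*j).descFactorial 4 : ℝ)) * y ^ (l - 4*j - 4) := by
    rw [hg, iteratedDeriv_sum_mono]
  have hgy : ψ y = ∑ j ∈ Finset.range N, b j * y ^ (l - 4*j) := by rw [hg]
  rw [hd, h4, hgy]
  -- rewrite the 4th-derivative sum using descFactorial composition and a shift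
  have hdesc : ∀ j : ℕ, ((l - 4*j).descFactorial 4 : ℕ) * l.descFactorial (4*j)
      = l.descFactorial (4*(j+1)) := by
    intro j
    have := Nat.descFactorial_mul_descFactorial (n := l) (k := 4*j) (m := 4*(j+1))
      (by omega)
    simpa [show 4*(j+1) - 4*j = 4 by omega] using this
  have hshift : (∑ j ∈ Finset.range N, (b j * ((l - 4*j).descFactorial 4 : ℝ)) * y ^ (l - 4*j - 4))
      = ∑ j ∈ Finset.range N, (j : ℝ) * b j * y ^ (l - 4*j) := by
    have hterm : ∀ j : ℕ, (b j * ((l - 4*j).descFactorial 4 : ℝ)) * y ^ (l - 4*j - 4)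
        = C * ((l.descFactorial (4*(j+1)) : ℝ) / (Nat.factorial j : ℝ)) * y ^ (l - 4*(j+1)) := by
      intro j
      have h1 : l - 4*j - 4 = l - 4*(j+1) := by omega
      rw [hb, h1]
      have := hdesc j
      have h2 : ((l - 4*j).descFactorial 4 : ℝ) * (l.descFactorial (4*j) : ℝ)
          = (l.descFactorial (4*(j+1)) : ℝ) := by exact_mod_cast congrArg Nat.cast this
      rw [← h2]
      ring
    calc (∑ j ∈ Finset.range N, (b j * ((l - 4*j).descFactorial 4 : ℝ)) * y ^ (l - 4*j - 4))
        = ∑ j ∈ Finset.range N,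
            C * ((l.descFactorial (4*(j+1)) : ℝ) / (Nat.factorial j : ℝ)) * y ^ (l - 4*(j+1)) :=
          Finset.sum_congr rfl fun j _ => hterm j
      _ = ∑ j ∈ Finset.range N, (j : ℝ) * b j * y ^ (l - 4*j) := by
          rw [Finset.sum_range_succ, Finset.sum_range_succ']
          have hz : l.descFactorial (4*((l/4)+1)) = 0 :=
            Nat.descFactorial_eq_zero_iff_lt.mpr (by omega)
          simp only [hN, hz, Nat.cast_zero, zero_div, mul_zero, zero_mul, add_zero,
            Nat.cast_zero, zero_mul]
          refine Finset.sum_congr rfl fun j _ => ?_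
          simp only [hb, Nat.factorial_succ, Nat.cast_mul, Nat.cast_add, Nat.cast_one]
          have hj : (Nat.factorial j : ℝ) ≠ 0 := Nat.cast_ne_zero.mpr (Nat.factorial_ne_zero j)
          have hj1 : (j : ℝ) + 1 ≠ 0 := by positivity
          field_simp
  rw [hshift, Finset.mul_sum, Finset.mul_sum, ← Finset.sum_neg_distrib,
    ← Finset.sum_sub_distrib]
  refine Finset.sum_congr rfl fun j hj => ?_
  have hjle : 4*j ≤ l := by
    have : j ≤ l/4 := by
      simp only [hN, Finset.mem_range] at hj; omega
    omega
  have hcast : ((l - 4*j : ℕ) : ℝ) = (l : ℝ) - 4*j := by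
    push_cast [hjle]; ring
  by_cases h0 : l - 4*j = 0
  · have hl : (l : ℝ) = 4*j := by
      have : l = 4*j := by omega
      exact_mod_cast this
    simp only [h0, hcast, hl, pow_zero, mul_one, Nat.cast_ofNat]
    ring
  · have hpow : y * y ^ (l - 4*j - 1) = y ^ (l - 4*j) := by
      rw [← pow_succ']
      congr 1
      omega
    rw [hcast]
    calc -((j : ℝ) * b j * y ^ (l - 4*j)) - 1/4 * y * (b j * ((l:ℝ) - 4*j) * y ^ (l - 4*j - 1))
        = -((j : ℝ) * b j * y ^ (l - 4*j))
            - 1/4 * (b j * ((l:ℝ) - 4*j)) * (y * y ^ (l - 4*j - 1)) := by ring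
      _ = -((l:ℝ)/4) * (b j * y ^ (l - 4*j)) := by rw [hpow]; ring
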